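/- arXiv:1303.3626 — 9 statements merged into one kernel-verified Lean document; each statement's English description precedes it below -/
import Mathlib

section
/- In a valid Patricia trie the label of a node determines its position: if `subtreeAt t π₁ = some u₁`, `subtreeAt t π₂ = some u₂`, and `lbl u₁ = lbl u₂`, then `π₁ = π₂` (and hence `u₁ = u₂`). In particular all node labels of a valid trie are pairwise distinct and every non-root node has a unique parent. (The paper's Lemma `no-same-node-lem`/`reachable-parent-lem`.) -/
inductive PTrie : Type
  | leaf (s : List Bool) : PTrie
  | node (s : List Bool) (l r : PTrie) : PTrie

/-- Label at the root of a trie. -/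
def lbl : PTrie → List Bool
  | .leaf s => s
  | .node s _ _ => s

/-- A trie is valid if for every internal node `node s l r`,
`s ++ [false]` is a prefix of `lbl l` and `s ++ [true]` is a prefix of `lbl r`. -/
def Valid : PTrie → Prop
  | .leaf _ => True
  | .node s l r => ((s ++ [false]) <+: lbl l) ∧ ((s ++ [true]) <+: lbl r) ∧ Valid l ∧ Valid r

/-- Subtree at a position: descend left on `false`, right on `true`. -/
def subtreeAt : PTrie → List Bool → Option PTrie
  | t, [] => some t
  | .leaf _, _ :: _ => none
  | .node _ l r, b :: π => subtreeAt (if b then r else l) π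

/-- Set of binary strings appearing at the leaves. -/
def leafLabels : PTrie → Set (List Bool)
  | .leaf s => {s}
  | .node _ l r => leafLabels l ∪ leafLabels r

/-- Sequential search. -/
def search (v : List Bool) : PTrie → PTrie
  | .leaf s => .leaf s
  | .node s l r =>
    if s <+: v ∧ s ≠ v then
      (if v.getD s.length false then search v r else search v l)
    else .node s l r

/-- Position of the node returned by `search`. -/
def searchPos (v : List Bool) : PTrie → List Bool
  | .leaf _ => []
  | .node s l r =>
    if s <+: v ∧ s ≠ v then
      (if v.getD s.length false then true :: searchPos v r else false :: searchPos v l)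
    else []

/-- Replace the subtree at a position. -/
def replaceAt : PTrie → List Bool → PTrie → PTrie
  | _, [], u => u
  | .leaf s, _ :: _, _ => .leaf s
  | .node s l r, b :: π, u =>
    if b then .node s l (replaceAt r π u) else .node s (replaceAt l π u) r

/-- Longest common prefix of two binary strings. -/
def lcp : List Bool → List Bool → List Bool
  | a :: as, b :: bs => if a = b then a :: lcp as bs else []
  | _, _ => []

/-- Join two tries under a new internal node labelled by the
longest common prefix of their labels. -/
def join (t₁ t₂ : PTrie) : PTrie :=
  if (lbl t₁).getD (lcp (lbl t₁) (lbl t₂)).length true then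
    .node (lcp (lbl t₁) (lbl t₂)) t₂ t₁
  else
    .node (lcp (lbl t₁) (lbl t₂)) t₁ t₂

/-- Sequential insert. -/
def insertT (v : List Bool) : PTrie → PTrie
  | .node s l r =>
    if s <+: v ∧ s ≠ v then
      (if v.getD s.length false then .node s l (insertT v r) else .node s (insertT v l) r)
    else join (.node s l r) (.leaf v)
  | .leaf s => join (.leaf s) (.leaf v)


lemma lbl_prefix_subtree : ∀ (π : List Bool) (t u : PTrie), Valid t →
    subtreeAt t π = some u → lbl t <+: lbl u := by
  intro π
  induction π with
  | nil => intro t u _ h; simp [subtreeAt] at h; subst h; exact List.prefix_rfl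
  | cons b π ih =>
    intro t u hv h
    cases t with
    | leaf s => simp [subtreeAt] at h
    | node s l r =>
      obtain ⟨hl, hr, hvl, hvr⟩ := hv
      simp only [subtreeAt] at h
      cases b with
      | false =>
        simp only [if_neg Bool.false_ne_true] at h
        exact (List.prefix_append s [false]).trans (hl.trans (ih l u hvl h))
      | true =>
        simp only [if_pos rfl] at h
        exact (List.prefix_append s [true]).trans (hr.trans (ih r u hvr h))

lemma lbl_prefix_subtree_cons (b : Bool) (π : List Bool) (t u : PTrie)
    (hv : Valid t) (h : subtreeAt t (b :: π) = some u) :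
    lbl t ++ [b] <+: lbl u := by
  cases t with
  | leaf s => simp [subtreeAt] at h
  | node s l r =>
    obtain ⟨hl, hr, hvl, hvr⟩ := hv
    simp only [subtreeAt] at h
    cases b with
    | false =>
      simp only [if_neg Bool.false_ne_true] at h
      exact hl.trans (lbl_prefix_subtree π l u hvl h)
    | true =>
      simp only [if_pos rfl] at h
      exact hr.trans (lbl_prefix_subtree π r u hvr h)

/-- In a valid Patricia trie the label of a node determines its position
(the paper's Lemmas `no-same-node-lem` / `reachable-parent-lem`). -/
theorem label_determines_position (t u₁ u₂ : PTrie) (π₁ π₂ : List Bool)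
    (hv : Valid t)
    (h1 : subtreeAt t π₁ = some u₁) (h2 : subtreeAt t π₂ = some u₂)
    (hl : lbl u₁ = lbl u₂) :
    π₁ = π₂ ∧ u₁ = u₂ := by
  induction t generalizing π₁ π₂ with
  | leaf s =>
    cases π₁ with
    | nil =>
      cases π₂ with
      | nil => simp [subtreeAt] at h1 h2; subst h1; subst h2; exact ⟨rfl, rfl⟩
      | cons b π => simp [subtreeAt] at h2
    | cons b π => simp [subtreeAt] at h1
  | node s l r ihl ihr =>
    have hv' := hv
    obtain ⟨hpl, hpr, hvl, hvr⟩ := hv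
    cases π₁ with
    | nil =>
      simp [subtreeAt] at h1; subst h1
      cases π₂ with
      | nil => simp [subtreeAt] at h2; subst h2; exact ⟨rfl, rfl⟩
      | cons b π =>
        exfalso
        have := lbl_prefix_subtree_cons b π _ u₂ hv' h2
        rw [← hl] at this
        have := this.length_le
        simp [lbl] at this
    | cons b₁ π₁' =>
      cases π₂ with
      | nil =>
        simp [subtreeAt] at h2; subst h2
        exfalso
        have := lbl_prefix_subtree_cons b₁ π₁' _ u₁ hv' h1
        rw [hl] at this
        have := this.length_le
        simp [lbl] at this
      | cons b₂ π₂' =>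
        have hb : b₁ = b₂ := by
          have t1 := lbl_prefix_subtree_cons b₁ π₁' _ u₁ hv' h1
          have t2 := lbl_prefix_subtree_cons b₂ π₂' _ u₂ hv' h2
          rw [hl] at t1
          obtain ⟨a1, e1⟩ := t1
          obtain ⟨a2, e2⟩ := t2
          rw [← e2] at e1
          have h3 := List.append_inj_left e1 (by simp)
          simpa using List.append_cancel_left h3
        subst hb
        simp only [subtreeAt] at h1 h2
        cases b₁ with
        | false =>
          simp only [if_neg Bool.false_ne_true] at h1 h2
          obtain ⟨h, h'⟩ := ihl π₁' π₂' hvl h1 h2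
          exact ⟨by rw [h], h'⟩
        | true =>
          simp only [if_pos rfl] at h1 h2
          obtain ⟨h, h'⟩ := ihr π₁' π₂' hvr h1 h2
          exact ⟨by rw [h], h'⟩
end

section
/- Let `t` be a valid Patricia trie in which every leaf label has length `ℓ`, and let `v : List Bool` with `|v| = ℓ`. Then `v ∈ leafLabels t` if and only if `search v t = leaf v`. (Sequential membership correctness of the paper's search operation: Lemmas `post-con-search-lem` and `search-val-not-in-trie-lem`.) -/
lemma lbl_prefix : ∀ t, Valid t → ∀ s ∈ leafLabels t, lbl t <+: s := by
  intro t
  induction t with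
  | leaf s => intro _ u hu; simp [leafLabels] at hu; subst hu; exact List.prefix_refl _
  | node s l r ihl ihr =>
    intro hv u hu
    obtain ⟨h1, h2, h3, h4⟩ := hv
    rcases hu with hu | hu
    · exact ((List.prefix_append _ _).trans h1).trans (ihl h3 u hu)
    · exact ((List.prefix_append _ _).trans h2).trans (ihr h4 u hu)

lemma getD_of_prefix {s v : List Bool} {b : Bool} (h : (s ++ [b]) <+: v) :
    v.getD s.length false = b := by
  obtain ⟨u, hu⟩ := h
  subst hu
  rw [List.append_assoc]
  simp [List.getD_append_right, List.getElem_append_right]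

/-- Sequential membership correctness of the search operation. -/
theorem search_correct (t : PTrie) (ℓ : ℕ) (hv : Valid t)
    (hleaf : ∀ s ∈ leafLabels t, s.length = ℓ)
    (v : List Bool) (hvlen : v.length = ℓ) :
    v ∈ leafLabels t ↔ search v t = PTrie.leaf v := by
  induction t with
  | leaf s =>
    simp [leafLabels, search]
    exact eq_comm

  | node s l r ihl ihr =>
    obtain ⟨h1, h2, h3, h4⟩ := hv
    have hll : ∀ u ∈ leafLabels l, u.length = ℓ := fun u hu => hleaf u (Or.inl hu)
    have hlr : ∀ u ∈ leafLabels r, u.length = ℓ := fun u hu => hleaf u (Or.inr hu)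
    by_cases hc : s <+: v ∧ s ≠ v
    · rw [search, if_pos hc]
      by_cases hb : v.getD s.length false = true
      · rw [if_pos hb]
        rw [← ihr h4 hlr]
        constructor
        · rintro (h | h)
          · exfalso
            have : (s ++ [false]) <+: v := h1.trans (lbl_prefix l h3 v h)
            rw [getD_of_prefix this] at hb; exact Bool.false_ne_true hb
          · exact h
        · intro h; exact Or.inr h
      · rw [if_neg hb]
        rw [← ihl h3 hll]
        constructor
        · rintro (h | h)
          · exact h
          · exfalso
            have : (s ++ [true]) <+: v := h2.trans (lbl_prefix r h4 v h)
            exact hb (getD_of_prefix this)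
        · intro h; exact Or.inl h
    · rw [search, if_neg hc]
      constructor
      · intro h
        exfalso
        have hpre : s <+: v := by
          -- v ∈ leafLabels implies lbl (node s l r) = s <+: v
          exact lbl_prefix (.node s l r) ⟨h1, h2, h3, h4⟩ v h
        have hne : s = v := by
          by_contra hne
          exact hc ⟨hpre, hne⟩
        have hslen : s.length = v.length := by rw [hne]
        rcases h with h | h
        · have := (h1.trans (lbl_prefix l h3 v h)).length_le
          simp at this
          omega
        · have := (h2.trans (lbl_prefix r h4 v h)).length_le
          simp at this
          omega
      · intro h; exact absurd h (by simp)
end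

section
/- Let `t` be a valid Patricia trie in which every leaf label has length `ℓ`, and let `v : List Bool` with `|v| = ℓ`. If `search v t` is an internal node `node s l r`, then `s` is not a prefix of `v`. (Post-condition (6) of the paper's search operation, Lemma `search-lem`.) -/
lemma lbl_prefix_leaf (t : PTrie) (hv : Valid t) :
    ∃ w ∈ leafLabels t, lbl t <+: w := by
  induction t with
  | leaf s => exact ⟨s, rfl, List.prefix_refl s⟩
  | node s l r ihl ihr =>
    obtain ⟨h1, _, hvl, _⟩ := hv
    obtain ⟨w, hw, hpw⟩ := ihl hvl
    exact ⟨w, Or.inl hw, ((s.prefix_append [false]).trans h1).trans hpw⟩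

/-- Post-condition (6) of the search operation: if search returns an internal
node, then its label is not a prefix of the key. -/
theorem search_internal_label_not_prefix (t : PTrie) (ℓ : ℕ) (hv : Valid t)
    (hleaf : ∀ s ∈ leafLabels t, s.length = ℓ)
    (v : List Bool) (hvlen : v.length = ℓ)
    (s : List Bool) (l r : PTrie)
    (h : search v t = PTrie.node s l r) :
    ¬ (s <+: v) := by
  induction t with
  | leaf s => simp [search] at h
  | node s' l' r' ihl ihr =>
    obtain ⟨h1, h2, hvl, hvr⟩ := hv
    rw [search] at h
    by_cases hc : s' <+: v ∧ s' ≠ v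
    · rw [if_pos hc] at h
      by_cases hb : v.getD s'.length false
      · rw [if_pos hb] at h
        exact ihr hvr (fun w hw => hleaf w (Or.inr hw)) h
      · rw [if_neg hb] at h
        exact ihl hvl (fun w hw => hleaf w (Or.inl hw)) h
    · rw [if_neg hc] at h
      cases h
      intro hp
      have hsv : s = v := by
        by_contra hne
        exact hc ⟨hp, hne⟩
      obtain ⟨w, hw, hpw⟩ := lbl_prefix_leaf l hvl
      have := h1.trans hpw
      have hlen := this.length_le
      have hwlen := hleaf w (Or.inl hw)
      rw [hsv, List.length_append, hvlen, hwlen] at hlen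
      simp at hlen
end

section
/- Let `t` be a valid Patricia trie and `v : List Bool`. For every proper prefix `π'` of `searchPos v t`, the subtree of `t` at position `π'` is an internal node whose label is a proper prefix of `v`, and the entry of `searchPos v t` at index `|π'|` equals the bit of `v` at index equal to the length of that node's label. (Post-conditions (3) and (5) of the paper's search operation, Lemma `search-lem`.) -/
/-- Post-conditions (3) and (5) of the search operation: every node passed
through by the search is an internal node whose label is a proper prefix of
`v`, and the search descends into the child given by the corresponding bit
of `v`. -/
theorem searchPos_spec (t : PTrie) (hv : Valid t) (v : List Bool)
    (π' : List Bool) (hpre : π' <+: searchPos v t) (hne : π' ≠ searchPos v t) :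
    ∃ (s : List Bool) (l r : PTrie),
      subtreeAt t π' = some (PTrie.node s l r) ∧
      s <+: v ∧ s ≠ v ∧
      (searchPos v t).getD π'.length false = v.getD s.length false := by
  induction t generalizing π' with
  | leaf s =>
    simp [searchPos] at hpre
    exact absurd hpre hne
  | node s l r ihl ihr =>
    rw [searchPos] at hpre hne ⊢
    by_cases hc : s <+: v ∧ s ≠ v
    · rw [if_pos hc] at hpre hne ⊢
      by_cases hb : v.getD s.length false
      · rw [if_pos hb] at hpre hne ⊢
        match π', hpre with
        | [], _ =>
          exact ⟨s, l, r, rfl, hc.1, hc.2, by simpa using hb⟩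
        | b :: rest, hpre =>
          obtain ⟨hb', hrest⟩ := List.cons_prefix_cons.mp hpre
          subst hb'
          have hne' : rest ≠ searchPos v r := fun h => hne (by rw [h])
          obtain ⟨s', l', r', h1, h2, h3, h4⟩ := ihr hv.2.2.2 rest hrest hne'
          exact ⟨s', l', r', by simpa [subtreeAt] using h1, h2, h3, by simpa using h4⟩
      · rw [if_neg hb] at hpre hne ⊢
        match π', hpre with
        | [], _ =>
          exact ⟨s, l, r, rfl, hc.1, hc.2, by simpa using eq_false_of_ne_true hb⟩
        | b :: rest, hpre =>
          obtain ⟨hb', hrest⟩ := List.cons_prefix_cons.mp hpre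
          subst hb'
          have hne' : rest ≠ searchPos v l := fun h => hne (by rw [h])
          obtain ⟨s', l', r', h1, h2, h3, h4⟩ := ihl hv.2.2.1 rest hrest hne'
          exact ⟨s', l', r', by simpa [subtreeAt] using h1, h2, h3, by simpa using h4⟩
    · rw [if_neg hc] at hpre hne
      simp at hpre
      exact absurd hpre hne
end

section
/- Let `t₁, t₂` be valid Patricia tries such that neither of `lbl t₁`, `lbl t₂` is a prefix of the other. Then `join t₁ t₂` is valid, `lbl (join t₁ t₂)` is the longest common prefix of `lbl t₁` and `lbl t₂`, and `leafLabels (join t₁ t₂) = leafLabels t₁ ∪ leafLabels t₂`. (Correctness of the paper's `createNode` routine, which builds a new internal node labelled by the longest common prefix of its two children's labels.) -/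
lemma prefix_lcp : ∀ (c a b : List Bool), c <+: a → c <+: b → c <+: lcp a b
  | [], _, _, _, _ => List.nil_prefix
  | x :: c, y :: a, z :: b, ha, hb => by
    obtain ⟨rfl, ha'⟩ := List.cons_prefix_cons.mp ha
    obtain ⟨rfl, hb'⟩ := List.cons_prefix_cons.mp hb
    simp only [lcp, if_pos rfl]
    exact List.cons_prefix_cons.mpr ⟨rfl, prefix_lcp c a b ha' hb'⟩
  | _ :: _, [], _, ha, _ => absurd (List.eq_nil_of_prefix_nil ha) (by simp)
  | _ :: _, _ :: _, [], _, hb => absurd (List.eq_nil_of_prefix_nil hb) (by simp)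

lemma lcp_split : ∀ (a b : List Bool), ¬ a <+: b → ¬ b <+: a →
    ∃ (x : Bool) (a' b' : List Bool),
      a = lcp a b ++ x :: a' ∧ b = lcp a b ++ (!x) :: b'
  | [], b, hab, _ => absurd List.nil_prefix hab
  | _ :: _, [], _, hba => absurd List.nil_prefix hba
  | x :: a, y :: b, hab, hba => by
    by_cases h : x = y
    · subst h
      have hab' : ¬ a <+: b := fun h => hab (List.cons_prefix_cons.mpr ⟨rfl, h⟩)
      have hba' : ¬ b <+: a := fun h => hba (List.cons_prefix_cons.mpr ⟨rfl, h⟩)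
      obtain ⟨z, a', b', ha, hb⟩ := lcp_split a b hab' hba'
      exact ⟨z, a', b', by simpa [lcp] using ha, by simpa [lcp] using hb⟩
    · refine ⟨x, a, b, by simp [lcp, h], ?_⟩
      have : y = !x := by cases x <;> cases y <;> simp_all
      simp [lcp, h, this]

lemma getD_append_cons : ∀ (p : List Bool) (x : Bool) (a : List Bool) (d : Bool),
    (p ++ x :: a).getD p.length d = x
  | [], _, _, _ => rfl
  | _ :: p, x, a, d => getD_append_cons p x a d

/-- Correctness of `join` (the paper's `createNode` routine). -/
theorem join_correct (t₁ t₂ : PTrie) (h1 : Valid t₁) (h2 : Valid t₂)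
    (h12 : ¬ (lbl t₁ <+: lbl t₂)) (h21 : ¬ (lbl t₂ <+: lbl t₁)) :
    Valid (join t₁ t₂) ∧
    (lbl (join t₁ t₂) <+: lbl t₁ ∧ lbl (join t₁ t₂) <+: lbl t₂ ∧
      ∀ c : List Bool, c <+: lbl t₁ → c <+: lbl t₂ → c <+: lbl (join t₁ t₂)) ∧
    leafLabels (join t₁ t₂) = leafLabels t₁ ∪ leafLabels t₂ := by
  obtain ⟨x, a', b', ha, hb⟩ := lcp_split (lbl t₁) (lbl t₂) h12 h21
  set p := lcp (lbl t₁) (lbl t₂) with hp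
  have hgetD : (lbl t₁).getD p.length true = x := by
    rw [ha]; exact getD_append_cons p x a' true
  have hpre1 : p <+: lbl t₁ := ⟨x :: a', ha.symm⟩
  have hpre2 : p <+: lbl t₂ := ⟨(!x) :: b', hb.symm⟩
  have hx1 : (p ++ [x]) <+: lbl t₁ := ⟨a', by simp [ha]⟩
  have hx2 : (p ++ [!x]) <+: lbl t₂ := ⟨b', by simp [hb]⟩
  unfold join
  rw [← hp, hgetD]
  cases x with
  | true =>
    simp only [if_pos rfl]
    refine ⟨⟨by simpa using hx2, by simpa using hx1, h2, h1⟩,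
      ⟨hpre1, hpre2, fun c hc1 hc2 => prefix_lcp c _ _ hc1 hc2⟩, ?_⟩
    simp [leafLabels, Set.union_comm]
  | false =>
    simp only [Bool.false_eq_true, if_false]
    exact ⟨⟨by simpa using hx1, by simpa using hx2, h1, h2⟩,
      ⟨hpre1, hpre2, fun c hc1 hc2 => prefix_lcp c _ _ hc1 hc2⟩, rfl⟩
end

section
/- Let `t` be a valid Patricia trie, `π` a position with `subtreeAt t π = some u`, and `u'` a valid trie. Suppose either `π = []`, or `π = π₀ ++ [i]` where `subtreeAt t π₀ = some p` and `lbl p ++ [i]` is a prefix of `lbl u'`. Then `replaceAt t π u'` is a valid trie. (The common validity argument behind all six cases in the paper's proof of Invariant 1.) -/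
lemma lbl_replaceAt_ne (t : PTrie) (π : List Bool) (u' : PTrie) (h : π ≠ []) :
    lbl (replaceAt t π u') = lbl t := by
  cases π with
  | nil => exact absurd rfl h
  | cons b π' =>
    cases t with
    | leaf s => rfl
    | node s l r => cases b <;> simp [replaceAt, lbl]

lemma replaceAt_valid' (π : List Bool) : ∀ (t u u' : PTrie),
    Valid t → subtreeAt t π = some u → Valid u' →
    (π = [] ∨ ∃ (π₀ : List Bool) (i : Bool) (p : PTrie),
        π = π₀ ++ [i] ∧ subtreeAt t π₀ = some p ∧ (lbl p ++ [i]) <+: lbl u') →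
    Valid (replaceAt t π u') := by
  induction π with
  | nil => intro t u u' _ _ hv' _; simpa [replaceAt] using hv'
  | cons b π' ih =>
    intro t u u' hv hsub hv' hcase
    cases t with
    | leaf s => simp [subtreeAt] at hsub
    | node s l r =>
      obtain ⟨h1, h2, hvl, hvr⟩ := hv
      rcases hcase with h | ⟨π₀, i, p, hπ, hp, hpre⟩
      · simp at h
      cases π₀ with
      | nil =>
        simp at hπ
        obtain ⟨hb, hπ'⟩ := hπ
        subst hb; subst hπ'
        simp [subtreeAt] at hp
        subst hp
        cases b <;> simp_all [replaceAt, Valid, lbl]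
      | cons b₀ π₀' =>
        simp at hπ
        obtain ⟨hb, hπ'⟩ := hπ
        subst hb; subst hπ'
        simp [subtreeAt] at hsub hp
        have hcase' : (π₀' ++ [i] = [] ∨ ∃ (π₀ : List Bool) (i' : Bool) (p' : PTrie),
            π₀' ++ [i] = π₀ ++ [i'] ∧ subtreeAt (if b then r else l) π₀ = some p' ∧
            (lbl p' ++ [i']) <+: lbl u') := Or.inr ⟨π₀', i, p, rfl, hp, hpre⟩
        have hval := ih (if b then r else l) u u' (by cases b <;> simpa) hsub hv' hcase'
        have hlbl := lbl_replaceAt_ne (if b then r else l) (π₀' ++ [i]) u' (by simp)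
        cases b <;> simp_all [replaceAt, Valid]


/-- Replacing a subtree by a valid trie whose label suitably extends the
parent's label yields a valid trie (the common validity argument behind all
six cases of the paper's Invariant 1). -/
theorem replaceAt_valid (t u u' : PTrie) (π : List Bool)
    (hv : Valid t) (hsub : subtreeAt t π = some u) (hv' : Valid u')
    (hcase : π = [] ∨ ∃ (π₀ : List Bool) (i : Bool) (p : PTrie),
        π = π₀ ++ [i] ∧ subtreeAt t π₀ = some p ∧ (lbl p ++ [i]) <+: lbl u') :
    Valid (replaceAt t π u') := by
  exact replaceAt_valid' π t u u' hv hsub hv' hcase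
end

section
/- Let `t` be a valid Patricia trie, `π` a position with `subtreeAt t π = some u`, and `u'` any trie. Then `leafLabels (replaceAt t π u') = (leafLabels t \ leafLabels u) ∪ leafLabels u'`. (The leaf-set accounting used throughout the paper's correctness proofs of update operations; it relies on the distinctness of node labels in a valid trie.) -/
lemma lbl_prefix_leafLabels (t : PTrie) (hv : Valid t) :
    ∀ x ∈ leafLabels t, lbl t <+: x := by
  induction t with
  | leaf s => intro x hx; simp [leafLabels] at hx; simp [hx, lbl]
  | node s l r ihl ihr =>
    obtain ⟨h1, h2, hvl, hvr⟩ := hv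
    intro x hx
    rcases hx with hx | hx
    · exact ((List.prefix_append s [false]).trans h1).trans (ihl hvl x hx)
    · exact ((List.prefix_append s [true]).trans h2).trans (ihr hvr x hx)

lemma leafLabels_subtreeAt (t u : PTrie) (π : List Bool)
    (h : subtreeAt t π = some u) : leafLabels u ⊆ leafLabels t := by
  induction t generalizing π with
  | leaf s => cases π with
    | nil => simp [subtreeAt] at h; subst h; rfl
    | cons b π => simp [subtreeAt] at h
  | node s l r ihl ihr =>
    cases π with
    | nil => simp [subtreeAt] at h; subst h; rfl
    | cons b π =>
      simp only [subtreeAt] at h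
      cases b with
      | false => exact (ihl π (by simpa using h)).trans (Set.subset_union_left)
      | true => exact (ihr π (by simpa using h)).trans (Set.subset_union_right)

lemma prefix_disjoint {s x : List Bool} (h1 : s ++ [false] <+: x) (h2 : s ++ [true] <+: x) :
    False := by
  obtain ⟨r1, hr1⟩ := h1
  obtain ⟨r2, hr2⟩ := h2
  rw [← hr1, List.append_assoc, List.append_assoc] at hr2
  have := List.append_cancel_left hr2
  simp at this

/-- Leaf-set accounting for subtree replacement. -/
theorem replaceAt_leafLabels (t u u' : PTrie) (π : List Bool)
    (hv : Valid t) (hsub : subtreeAt t π = some u) :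
    leafLabels (replaceAt t π u') = (leafLabels t \ leafLabels u) ∪ leafLabels u' := by
  induction t generalizing π with
  | leaf s =>
    cases π with
    | nil =>
      simp [subtreeAt] at hsub; subst hsub
      simp [replaceAt, leafLabels]
    | cons b π => simp [subtreeAt] at hsub
  | node s l r ihl ihr =>
    cases π with
    | nil =>
      simp [subtreeAt] at hsub; subst hsub
      simp [replaceAt]
    | cons b π =>
      obtain ⟨h1, h2, hvl, hvr⟩ := hv
      simp only [subtreeAt] at hsub
      cases b with
      | false =>
        have hsub' : subtreeAt l π = some u := by simpa using hsub
        have hu : leafLabels u ⊆ leafLabels l := leafLabels_subtreeAt l u π hsub'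
        have hdisj : Disjoint (leafLabels r) (leafLabels u) := by
          rw [Set.disjoint_left]
          intro x hxr hxu
          exact prefix_disjoint
            (h1.trans (lbl_prefix_leafLabels l hvl x (hu hxu)))
            (h2.trans (lbl_prefix_leafLabels r hvr x hxr))
        rw [show replaceAt (.node s l r) (false :: π) u' =
            .node s (replaceAt l π u') r by simp [replaceAt]]
        show leafLabels (replaceAt l π u') ∪ leafLabels r = _
        rw [ihl π hvl hsub']
        rw [show leafLabels (PTrie.node s l r) = leafLabels l ∪ leafLabels r from rfl]
        rw [Set.union_diff_distrib, hdisj.sdiff_eq_left]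
        ext x; simp; tauto
      | true =>
        have hsub' : subtreeAt r π = some u := by simpa using hsub
        have hu : leafLabels u ⊆ leafLabels r := leafLabels_subtreeAt r u π hsub'
        have hdisj : Disjoint (leafLabels l) (leafLabels u) := by
          rw [Set.disjoint_left]
          intro x hxl hxu
          exact prefix_disjoint
            (h1.trans (lbl_prefix_leafLabels l hvl x hxl))
            (h2.trans (lbl_prefix_leafLabels r hvr x (hu hxu)))
        rw [show replaceAt (.node s l r) (true :: π) u' =
            .node s l (replaceAt r π u') by simp [replaceAt]]
        show leafLabels l ∪ leafLabels (replaceAt r π u') = _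
        rw [ihr π hvr hsub']
        rw [show leafLabels (PTrie.node s l r) = leafLabels l ∪ leafLabels r from rfl]
        rw [Set.union_diff_distrib, hdisj.sdiff_eq_left]
        ext x; simp; tauto
end

section
/- Let `t` be a valid Patricia trie and `π` a position with `subtreeAt t π = some (node s c₀ c₁)` such that for some bit `b` the child `c_b` equals `leaf v`; write `u'` for the other child. Then `replaceAt t π u'` is valid and `leafLabels (replaceAt t π u') = leafLabels t \ {v}`. (Sequential correctness of the paper's delete operation: Case 2 of Invariant 1 together with Lemma `successful-del-lem`.) -/
lemma labels_prefix : ∀ t : PTrie, Valid t → ∀ w ∈ leafLabels t, lbl t <+: w := by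
  intro t
  induction t with
  | leaf s =>
    intro _ w hw
    simp [leafLabels] at hw
    simp [lbl, hw]
  | node s l r ihl ihr =>
    rintro ⟨h1, h2, hl, hr⟩ w hw
    rcases hw with hw | hw
    · exact ((List.prefix_append s [false]).trans h1).trans (ihl hl w hw)
    · exact ((List.prefix_append s [true]).trans h2).trans (ihr hr w hw)

lemma subtree_labels : ∀ (π : List Bool) (t w : PTrie), subtreeAt t π = some w →
    leafLabels w ⊆ leafLabels t := by
  intro π
  induction π with
  | nil =>
    intro t w h
    simp [subtreeAt] at h
    simp [h]
  | cons p π ih =>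
    intro t w h
    cases t with
    | leaf s => simp [subtreeAt] at h
    | node s l r =>
      simp [subtreeAt] at h
      cases p with
      | false => exact (ih _ _ (by simpa using h)).trans (Set.subset_union_left)
      | true => exact (ih _ _ (by simpa using h)).trans (Set.subset_union_right)

lemma diverge {a w v : List Bool} {x : Bool} (h1 : (a ++ [x]) <+: w)
    (h2 : (a ++ [!x]) <+: v) : w ≠ v := by
  obtain ⟨u1, rfl⟩ := h1
  obtain ⟨u2, h⟩ := h2
  intro he
  rw [← he] at h
  simp at h

lemma delete_main (b : Bool) (v : List Bool) :
    ∀ (π : List Bool) (t : PTrie) (s : List Bool) (c₀ c₁ : PTrie), Valid t →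
    subtreeAt t π = some (PTrie.node s c₀ c₁) →
    (if b then c₁ else c₀) = PTrie.leaf v →
    Valid (replaceAt t π (if b then c₀ else c₁)) ∧
    leafLabels (replaceAt t π (if b then c₀ else c₁)) = leafLabels t \ {v} ∧
    lbl t <+: lbl (replaceAt t π (if b then c₀ else c₁)) := by
  intro π
  induction π with
  | nil =>
    intro t s c₀ c₁ hv hsub hb
    simp [subtreeAt] at hsub
    subst hsub
    obtain ⟨h1, h2, hl, hr⟩ := hv
    cases b with
    | false =>
      simp only [if_neg Bool.false_ne_true, if_pos rfl] at hb ⊢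
      subst hb
      refine ⟨hr, ?_, ?_⟩
      · have hnotin : v ∉ leafLabels c₁ := by
          intro hin
          exact diverge (x := true) (h2.trans (labels_prefix c₁ hr v hin))
            (by simpa [lbl] using h1) rfl
        simp only [replaceAt, leafLabels, lbl]
        ext x
        simp only [Set.mem_union, Set.mem_diff, Set.mem_singleton_iff, leafLabels]
        constructor
        · intro hx
          exact ⟨Or.inr hx, fun he => hnotin (he ▸ hx)⟩
        · rintro ⟨hx | hx, hne⟩
          · exact absurd hx hne
          · exact hx
      · exact (List.prefix_append s [true]).trans (by simpa [replaceAt, lbl] using h2)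
    | true =>
      simp only [if_pos rfl] at hb ⊢
      subst hb
      refine ⟨hl, ?_, ?_⟩
      · have hnotin : v ∉ leafLabels c₀ := by
          intro hin
          exact diverge (x := false) (h1.trans (labels_prefix c₀ hl v hin))
            (by simpa [lbl] using h2) rfl
        simp only [replaceAt, leafLabels, lbl]
        ext x
        simp only [Set.mem_union, Set.mem_diff, Set.mem_singleton_iff, leafLabels]
        constructor
        · intro hx
          exact ⟨Or.inl hx, fun he => hnotin (he ▸ hx)⟩
        · rintro ⟨hx | hx, hne⟩
          · exact hx
          · exact absurd hx hne
      · exact (List.prefix_append s [false]).trans (by simpa [replaceAt, lbl] using h1)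
  | cons p π ih =>
    intro t s c₀ c₁ hv hsub hb
    cases t with
    | leaf s₀ => simp [subtreeAt] at hsub
    | node s₀ l r =>
      obtain ⟨h1, h2, hl, hr⟩ := hv
      simp only [subtreeAt] at hsub
      have hvin : v ∈ leafLabels (PTrie.node s c₀ c₁) := by
        cases b with
        | false => subst hb; exact Or.inl rfl
        | true => subst hb; exact Or.inr rfl
      cases p with
      | true =>
        simp only [if_pos rfl] at hsub
        obtain ⟨V, L, P⟩ := ih r s c₀ c₁ hr hsub hb
        have hvr : v ∈ leafLabels r := subtree_labels π r _ hsub hvin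
        have hvnl : ∀ w ∈ leafLabels l, w ≠ v := fun w hw =>
          diverge (x := false) (h1.trans (labels_prefix l hl w hw))
            (by simpa using h2.trans (labels_prefix r hr v hvr))
        simp only [replaceAt, if_pos rfl]
        refine ⟨⟨h1, h2.trans P, hl, V⟩, ?_, by simp [lbl]⟩
        simp only [leafLabels, ↓reduceIte]
        rw [L]
        ext x
        simp only [Set.mem_union, Set.mem_diff, Set.mem_singleton_iff]
        constructor
        · rintro (hx | ⟨hx, hne⟩)
          · exact ⟨Or.inl hx, hvnl x hx⟩
          · exact ⟨Or.inr hx, hne⟩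
        · rintro ⟨hx | hx, hne⟩
          · exact Or.inl hx
          · exact Or.inr ⟨hx, hne⟩
      | false =>
        simp only [if_neg Bool.false_ne_true] at hsub
        obtain ⟨V, L, P⟩ := ih l s c₀ c₁ hl hsub hb
        have hvl : v ∈ leafLabels l := subtree_labels π l _ hsub hvin
        have hvnr : ∀ w ∈ leafLabels r, w ≠ v := fun w hw =>
          diverge (x := true) (h2.trans (labels_prefix r hr w hw))
            (by simpa using h1.trans (labels_prefix l hl v hvl))
        simp only [replaceAt, if_neg Bool.false_ne_true]
        refine ⟨⟨h1.trans P, h2, V, hr⟩, ?_, by simp [lbl]⟩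
        simp only [leafLabels, L]
        ext x
        simp only [Set.mem_union, Set.mem_diff, Set.mem_singleton_iff]
        constructor
        · rintro (⟨hx, hne⟩ | hx)
          · exact ⟨Or.inl hx, hne⟩
          · exact ⟨Or.inr hx, hvnr x hx⟩
        · rintro ⟨hx | hx, hne⟩
          · exact Or.inl ⟨hx, hne⟩
          · exact Or.inr hx

/-- Sequential correctness of the delete operation. -/
theorem delete_correct (t c₀ c₁ : PTrie) (s v : List Bool)
    (π : List Bool) (b : Bool)
    (hv : Valid t)
    (hsub : subtreeAt t π = some (PTrie.node s c₀ c₁))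
    (hb : (if b then c₁ else c₀) = PTrie.leaf v) :
    Valid (replaceAt t π (if b then c₀ else c₁)) ∧
    leafLabels (replaceAt t π (if b then c₀ else c₁)) = leafLabels t \ {v} := by
  obtain ⟨V, L, _⟩ := delete_main b v π t s c₀ c₁ hv hsub hb
  exact ⟨V, L⟩
end

section
/- Let `t` be a valid Patricia trie and let `π = π₀ ++ [b]` be a nonempty position with `subtreeAt t π = some (leaf v_d)` and `subtreeAt t π₀ = some (node s l r)`. Suppose `s ++ [b]` is a prefix of `v_i`. Then `replaceAt t π (leaf v_i)` is valid and `leafLabels (replaceAt t π (leaf v_i)) = (leafLabels t \ {v_d}) ∪ {v_i}`. (Special case 1 of the paper's replace operation, where both searches return the same leaf: Case 4 of Invariant 1 and Case 1 of Lemma `successful-special-mov-lem`.) -/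
lemma lbl_prefix_s14 (t : PTrie) (hv : Valid t) {v : List Bool} (hm : v ∈ leafLabels t) :
    lbl t <+: v := by
  induction t with
  | leaf s => simp [leafLabels] at hm; simp [lbl, hm]
  | node s l r ihl ihr =>
    obtain ⟨h1, h2, h3, h4⟩ := hv
    have hs : (lbl (PTrie.node s l r)) = s := rfl
    rcases hm with hm | hm
    · exact hs ▸ (((List.prefix_append s [false]).trans h1).trans (ihl h3 hm))
    · exact hs ▸ (((List.prefix_append s [true]).trans h2).trans (ihr h4 hm))

lemma prefix_getD {s v : List Bool} {b : Bool} (h : (s ++ [b]) <+: v) (c : Bool) :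
    v.getD s.length c = b := by
  obtain ⟨w, rfl⟩ := h
  rw [List.append_assoc]
  simp [List.getD, List.getElem?_append_right, List.getElem_append_right]

lemma not_both {s v : List Bool} (h1 : (s ++ [false]) <+: v) (h2 : (s ++ [true]) <+: v) :
    False := by
  have := prefix_getD h1 true
  have := prefix_getD h2 true
  simp_all

lemma sub_valid {t u : PTrie} {π : List Bool} (hv : Valid t)
    (h : subtreeAt t π = some u) : Valid u := by
  induction π generalizing t with
  | nil => simp [subtreeAt] at h; exact h ▸ hv
  | cons c π ih =>
    cases t with
    | leaf s => simp [subtreeAt] at h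
    | node s l r =>
      obtain ⟨_, _, h3, h4⟩ := hv
      simp [subtreeAt] at h
      cases c
      · simp only [Bool.false_eq_true, if_false] at h; exact ih h3 h
      · simp only [if_true] at h; exact ih h4 h

lemma sub_labels {t u : PTrie} {π : List Bool} (h : subtreeAt t π = some u) :
    leafLabels u ⊆ leafLabels t := by
  induction π generalizing t with
  | nil => simp [subtreeAt] at h; exact h ▸ subset_rfl
  | cons c π ih =>
    cases t with
    | leaf s => simp [subtreeAt] at h
    | node s l r =>
      simp [subtreeAt] at h
      cases c <;> simp only [if_true, if_false, Bool.false_eq_true] at h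
      · exact (ih h).trans (by simp [leafLabels])
      · exact (ih h).trans (by simp [leafLabels])

lemma set_rw {A B : Set (List Bool)} {vd vi : List Bool} (h : vd ∉ A) :
    A ∪ ((B \ {vd}) ∪ {vi}) = ((A ∪ B) \ {vd}) ∪ {vi} := by
  ext x
  simp only [Set.mem_union, Set.mem_diff, Set.mem_singleton_iff]
  constructor
  · rintro (hx | ⟨hx, hne⟩ | rfl)
    · exact Or.inl ⟨Or.inl hx, fun he => h (he ▸ hx)⟩
    · exact Or.inl ⟨Or.inr hx, hne⟩
    · exact Or.inr rfl
  · rintro (⟨hx | hx, hne⟩ | rfl)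
    · exact Or.inl hx
    · exact Or.inr (Or.inl ⟨hx, hne⟩)
    · exact Or.inr (Or.inr rfl)

lemma set_rw' {A B : Set (List Bool)} {vd vi : List Bool} (h : vd ∉ B) :
    ((A \ {vd}) ∪ {vi}) ∪ B = ((A ∪ B) \ {vd}) ∪ {vi} := by
  ext x
  simp only [Set.mem_union, Set.mem_diff, Set.mem_singleton_iff]
  constructor
  · rintro ((⟨hx, hne⟩ | rfl) | hx)
    · exact Or.inl ⟨Or.inl hx, hne⟩
    · exact Or.inr rfl
    · exact Or.inl ⟨Or.inr hx, fun he => h (he ▸ hx)⟩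
  · rintro (⟨hx | hx, hne⟩ | rfl)
    · exact Or.inl (Or.inl ⟨hx, hne⟩)
    · exact Or.inr hx
    · exact Or.inl (Or.inr rfl)

lemma lbl_replace {π : List Bool} (hne : π ≠ []) (t u : PTrie) :
    lbl (replaceAt t π u) = lbl t := by
  cases π with
  | nil => exact absurd rfl hne
  | cons x π => cases t <;> cases x <;> simp [replaceAt, lbl]

/-- Special case 1 of the replace operation: replacing a leaf in place. -/
theorem replace_special_case1 (t : PTrie) (hv : Valid t)
    (π₀ : List Bool) (b : Bool) (vd vi s : List Bool) (l r : PTrie)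
    (hπ : subtreeAt t (π₀ ++ [b]) = some (PTrie.leaf vd))
    (hπ0 : subtreeAt t π₀ = some (PTrie.node s l r))
    (hpre : (s ++ [b]) <+: vi) :
    Valid (replaceAt t (π₀ ++ [b]) (PTrie.leaf vi)) ∧
    leafLabels (replaceAt t (π₀ ++ [b]) (PTrie.leaf vi)) =
      (leafLabels t \ {vd}) ∪ {vi} := by
  induction π₀ generalizing t with
  | nil =>
    simp [subtreeAt] at hπ0
    subst hπ0
    obtain ⟨h1, h2, h3, h4⟩ := hv
    cases b with
    | false =>
      simp [subtreeAt] at hπ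
      subst hπ
      have hnd : vd ∉ leafLabels r := fun hm =>
        not_both h1 (h2.trans (lbl_prefix_s14 r h4 hm))
      refine ⟨⟨hpre, h2, trivial, h4⟩, ?_⟩
      show {vi} ∪ leafLabels r = (({vd} ∪ leafLabels r) \ {vd}) ∪ {vi}
      rw [← set_rw' hnd]
      simp
    | true =>
      simp [subtreeAt] at hπ
      subst hπ
      have hnd : vd ∉ leafLabels l := fun hm =>
        not_both (h1.trans (lbl_prefix_s14 l h3 hm)) h2
      refine ⟨⟨h1, hpre, h3, trivial⟩, ?_⟩
      show leafLabels l ∪ {vi} = ((leafLabels l ∪ {vd}) \ {vd}) ∪ {vi}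
      rw [Set.union_comm (leafLabels l) {vd}, ← set_rw' hnd]
      simp [Set.union_comm]
  | cons c π₀ ih =>
    cases t with
    | leaf s' => simp [subtreeAt] at hπ0
    | node s' l' r' =>
      obtain ⟨h1, h2, h3, h4⟩ := hv
      simp only [List.cons_append, subtreeAt, List.append_eq] at hπ hπ0
      cases c with
      | false =>
        simp only [Bool.false_eq_true, if_false] at hπ hπ0
        obtain ⟨ihv, ihl⟩ := ih l' h3 hπ hπ0
        have hvd : vd ∈ leafLabels l' := sub_labels hπ (by simp [leafLabels])
        have hnd : vd ∉ leafLabels r' := fun hm =>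
          not_both (h1.trans (lbl_prefix_s14 l' h3 hvd)) (h2.trans (lbl_prefix_s14 r' h4 hm))
        simp only [List.cons_append, replaceAt, List.append_eq, Bool.false_eq_true, if_false]
        refine ⟨⟨?_, h2, ihv, h4⟩, ?_⟩
        · rw [lbl_replace (by simp)]; exact h1
        · show leafLabels _ ∪ leafLabels r' = _
          rw [ihl]
          exact set_rw' hnd
      | true =>
        simp only [if_true] at hπ hπ0
        obtain ⟨ihv, ihl⟩ := ih r' h4 hπ hπ0
        have hvd : vd ∈ leafLabels r' := sub_labels hπ (by simp [leafLabels])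
        have hnd : vd ∉ leafLabels l' := fun hm =>
          not_both (h1.trans (lbl_prefix_s14 l' h3 hm)) (h2.trans (lbl_prefix_s14 r' h4 hvd))
        simp only [List.cons_append, replaceAt, List.append_eq, if_true]
        refine ⟨⟨h1, ?_, h3, ihv⟩, ?_⟩
        · rw [lbl_replace (by simp)]; exact h2
        · show leafLabels l' ∪ leafLabels _ = _
          rw [ihl]
          exact set_rw hnd
end
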